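/- Let S ⊆ R be a Frobenius extension of k-algebras with R a finite free S-module, S contained in the centre of R, and Frobenius form Φ: R → S. Then there exists a k-algebra automorphism ν of R (the Nakayama automorphism) such that Φ(qr) = Φ(ν(r)q) for all q, r ∈ R. -/

import Mathlib

/-!
STATEMENT 7: Let `S ⊆ R` be a Frobenius extension of `k`-algebras with `R` a finite
free `S`-module, `S` contained in the centre of `R`, and Frobenius form `Φ : R → S`.
Then there exists a `k`-algebra automorphism `ν` of `R` (the Nakayama automorphism)
such that `Φ(qr) = Φ(ν(r)q)` for all `q, r ∈ R`.
-/

/-- `Φ : R → S` is a Frobenius form for the extension `S ⊆ R`: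
(F1) its kernel contains no nonzero left ideal and no nonzero right ideal of `R`, and
(F2) the assignment `r ↦ (q ↦ Φ(rq))` is surjective onto `Hom_S(R,S)`. -/
def IsFrobeniusForm {k R : Type*} [Field k] [Ring R] [Algebra k R]
    (S : Subalgebra k R) (Φ : R →ₗ[S] S) : Prop :=
  (∀ I : Ideal R, (∀ x ∈ I, Φ x = 0) → I = ⊥) ∧
  (∀ I : Submodule Rᵐᵒᵖ R, (∀ x ∈ I, Φ x = 0) → I = ⊥) ∧
  (∀ f : R →ₗ[S] S, ∃ r : R, ∀ q : R, f q = Φ (r * q))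

/-- **Nakayama automorphism.** If `S ⊆ R` is a free Frobenius extension
with `S` central in `R` and Frobenius form `Φ`, then there is a `k`-algebra
automorphism `ν : R ≃ₐ[k] R` with `Φ(qr) = Φ(ν(r)q)` for all `q, r ∈ R`. -/
theorem exists_nakayama_automorphism
    {k R : Type*} [Field k] [Ring R] [Algebra k R] (S : Subalgebra k R)
    (hcentral : (S : Set R) ⊆ Set.center R)
    (hfin : Module.Finite S R) (hfree : Module.Free S R)
    (Φ : R →ₗ[S] S) (hΦ : IsFrobeniusForm S Φ) :
    ∃ ν : R ≃ₐ[k] R, ∀ q r : R, Φ (q * r) = Φ (ν r * q) := by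
  classical
  obtain ⟨hL, hR, hsurj⟩ := hΦ
  have hc : ∀ (s : S) (x : R), (s : R) * x = x * (s : R) :=
    fun s x => (hcentral s.2).comm x
  have hsm : ∀ (s : S) (x : R), s • x = (s : R) * x := fun s x => rfl
  have hScomm : ∀ s t : S, s * t = t * s := fun s t => Subtype.ext (hc s t)
  -- left faithfulness
  have hleft : ∀ z : R, (∀ q, Φ (q * z) = 0) → z = 0 := by
    intro z hz
    have h0 : Submodule.span R {z} = ⊥ := by
      apply hL
      intro x hx
      rw [Submodule.mem_span_singleton] at hx
      obtain ⟨a, ha⟩ := hx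
      rw [← ha, smul_eq_mul]; exact hz a
    have : z ∈ Submodule.span R ({z} : Set R) := Submodule.mem_span_singleton_self z
    rw [h0] at this; exact this
  have hright : ∀ z : R, (∀ q, Φ (z * q) = 0) → z = 0 := by
    intro z hz
    have h0 : Submodule.span Rᵐᵒᵖ {z} = ⊥ := by
      apply hR
      intro x hx
      rw [Submodule.mem_span_singleton] at hx
      obtain ⟨a, ha⟩ := hx
      have : x = z * a.unop := by rw [← ha]; rfl
      rw [this]; exact hz a.unop
    have : z ∈ Submodule.span Rᵐᵒᵖ ({z} : Set R) := Submodule.mem_span_singleton_self z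
    rw [h0] at this; exact this
  have huL : ∀ a b : R, (∀ q, Φ (q * a) = Φ (q * b)) → a = b := by
    intro a b h
    have := hleft (a - b) (fun q => by rw [mul_sub, map_sub, h, sub_self])
    exact sub_eq_zero.mp this
  have huR : ∀ a b : R, (∀ q, Φ (a * q) = Φ (b * q)) → a = b := by
    intro a b h
    have := hright (a - b) (fun q => by rw [sub_mul, map_sub, h, sub_self])
    exact sub_eq_zero.mp this
  -- define ν via choice
  have hν : ∀ r : R, ∃ n : R, ∀ q, Φ (q * r) = Φ (n * q) := by
    intro r
    obtain ⟨n, hn⟩ := hsurj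
      { toFun := fun q => Φ (q * r)
        map_add' := fun a b => by
          show Φ ((a + b) * r) = Φ (a * r) + Φ (b * r)
          rw [add_mul, map_add]
        map_smul' := fun s q => by
          show Φ ((s • q) * r) = s • Φ (q * r)
          rw [hsm, mul_assoc, ← hsm, map_smul] }
    exact ⟨n, fun q => hn q⟩
  choose ν hνe using hν
  -- dual bases
  let b : Module.Basis (Module.Free.ChooseBasisIndex S R) S R := Module.Free.chooseBasis S R
  have hy : ∀ i, ∃ y : R, ∀ q, b.coord i q = Φ (y * q) := fun i => hsurj (b.coord i)
  choose y hyc using hy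
  have hstar : ∀ r : R, ∑ i, (Φ (y i * r)) • b i = r := by
    intro r
    conv_rhs => rw [← b.sum_repr r]
    refine Finset.sum_congr rfl fun i _ => ?_
    rw [← hyc i r]; rfl
  -- second dual basis identity
  have hstar2 : ∀ r : R, ∑ i, (Φ (r * b i)) • y i = r := by
    intro r
    apply huR _ r
    intro q
    have lhs : Φ ((∑ i, (Φ (r * b i)) • y i) * q) = ∑ i, Φ (r * b i) * Φ (y i * q) := by
      rw [Finset.sum_mul, map_sum]
      refine Finset.sum_congr rfl fun i _ => ?_
      rw [hsm, mul_assoc, ← hsm, map_smul]; rfl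
    have rhs : Φ (r * q) = ∑ i, Φ (y i * q) * Φ (r * b i) := by
      conv_lhs => rw [← hstar q]
      rw [Finset.mul_sum, map_sum]
      refine Finset.sum_congr rfl fun i _ => ?_
      rw [hsm, ← mul_assoc, ← hc, mul_assoc, ← hsm, map_smul]; rfl
    rw [lhs, rhs]
    exact Finset.sum_congr rfl fun i _ => hScomm _ _
  -- right inverse μ
  set μ : R → R := fun r => ∑ i, (Φ (r * y i)) • b i with hμdef
  have hμ : ∀ r q : R, Φ (q * μ r) = Φ (r * q) := by
    intro r q
    have lhs : Φ (q * μ r) = ∑ i, Φ (r * y i) * Φ (q * b i) := by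
      rw [hμdef]
      simp only []
      rw [Finset.mul_sum, map_sum]
      refine Finset.sum_congr rfl fun i _ => ?_
      rw [hsm, ← mul_assoc, ← hc, mul_assoc, ← hsm, map_smul]; rfl
    have rhs : Φ (r * q) = ∑ i, Φ (q * b i) * Φ (r * y i) := by
      conv_lhs => rw [← hstar2 q]
      rw [Finset.mul_sum, map_sum]
      refine Finset.sum_congr rfl fun i _ => ?_
      rw [hsm, ← mul_assoc, ← hc, mul_assoc, ← hsm, map_smul]; rfl
    rw [lhs, rhs]
    exact Finset.sum_congr rfl fun i _ => hScomm _ _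
  have hsurjν : Function.Surjective ν := by
    intro r
    refine ⟨μ r, huR _ _ fun q => ?_⟩
    rw [← hνe (μ r) q, hμ]
  have hinjν : Function.Injective ν := by
    intro a c h
    apply huL
    intro q
    rw [hνe a q, hνe c q, h]
  let νa : R →ₐ[k] R :=
    { toFun := ν
      map_one' := huR _ _ fun q => by
        show Φ (ν 1 * q) = Φ (1 * q)
        rw [← hνe 1 q, mul_one, one_mul]
      map_mul' := fun a c => huR _ _ fun q => by
        show Φ (ν (a * c) * q) = Φ ((ν a * ν c) * q)
        rw [← hνe (a * c) q, ← mul_assoc, hνe c (q * a), ← mul_assoc,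
          hνe a (ν c * q), ← mul_assoc]
      map_zero' := huR _ _ fun q => by rw [← hνe 0 q, mul_zero, zero_mul]
      map_add' := fun a c => huR _ _ fun q => by
        show Φ (ν (a + c) * q) = Φ ((ν a + ν c) * q)
        rw [← hνe (a + c) q, mul_add, map_add, hνe a q, hνe c q, add_mul, map_add]
      commutes' := fun c => by
        apply huR
        intro q
        rw [← hνe (algebraMap k R c) q]
        have hmem : algebraMap k R c ∈ S := S.algebraMap_mem c
        exact congrArg Φ (hc ⟨_, hmem⟩ q).symm }
  refine ⟨AlgEquiv.ofBijective νa ⟨hinjν, hsurjν⟩, fun q r => ?_⟩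
  exact hνe r q
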